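/- For a positive real number k and n ≥ 1, the hyperbolic k-Fibonacci quaternion satisfies HF_{k,n}·conj(HF_{k,n}) + HF_{k,n−1}·conj(HF_{k,n−1}) = F_{k,2n−1} − F_{k,2n+1} − F_{k,2n+3} − F_{k,2n+5} (a real scalar), where the product HF·conj(HF) equals the real number F_{k,n}² − F_{k,n+1}² − F_{k,n+2}² − F_{k,n+3}². -/
import Mathlib


noncomputable def kFib (k : ℝ) : ℕ → ℝ
  | 0 => 0
  | 1 => 1
  | (n + 2) => k * kFib k (n + 1) + kFib k n

noncomputable def kLucas (k : ℝ) : ℕ → ℝ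
  | 0 => 2
  | 1 => k
  | (n + 2) => k * kLucas k (n + 1) + kLucas k n

noncomputable def HF (k : ℝ) (n : ℕ) : Fin 4 → ℝ :=
  ![kFib k n, kFib k (n + 1), kFib k (n + 2), kFib k (n + 3)]

noncomputable def HL (k : ℝ) (n : ℕ) : Fin 4 → ℝ :=
  ![kLucas k n, kLucas k (n + 1), kLucas k (n + 2), kLucas k (n + 3)]

lemma kFib_add (k : ℝ) : ∀ a b, kFib k (a + b + 1) = kFib k (a+1) * kFib k (b+1) + kFib k a * kFib k b
  | 0, b => by simp [kFib]
  | 1, b => by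
      rw [show 1+b+1 = b+2 by omega, kFib]
      norm_num [kFib]
  | (a+2), b => by
      have h1 := kFib_add k a b
      have h2 := kFib_add k (a+1) b
      have ea : kFib k (a+2) = k * kFib k (a+1) + kFib k a := by rw [kFib]
      have eb : kFib k (a+3) = k * kFib k (a+2) + kFib k (a+1) := by
        rw [show a+3 = (a+1)+2 from rfl, kFib, show a+1+1 = a+2 from rfl]
      rw [show a+2+b+1 = (a+b+1)+2 from by ring, kFib,
          show a+b+1+1 = (a+1)+b+1 from by ring, h1, h2,
          show a+2+1 = a+3 from rfl, eb, ea]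
      ring

lemma kFib_sq (k : ℝ) (m : ℕ) :
    kFib k (m+1) ^ 2 + kFib k m ^ 2 = kFib k (2*m+1) := by
  have := kFib_add k m m
  rw [show 2*m+1 = m+m+1 by ring, this]; ring

def hconj (a : Fin 4 → ℝ) : Fin 4 → ℝ := ![a 0, -a 1, -a 2, -a 3]

def hmul (a b : Fin 4 → ℝ) : Fin 4 → ℝ :=
  ![a 0 * b 0 + a 1 * b 1 + a 2 * b 2 + a 3 * b 3,
    a 0 * b 1 + a 1 * b 0 + a 2 * b 3 - a 3 * b 2,
    a 0 * b 2 + a 2 * b 0 - a 1 * b 3 + a 3 * b 1,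
    a 0 * b 3 + a 3 * b 0 + a 1 * b 2 - a 2 * b 1]

theorem HF_norm_sum (k : ℝ) (hk : 0 < k) (n : ℕ) (hn : 1 ≤ n) :
    hmul (HF k n) (hconj (HF k n)) + hmul (HF k (n - 1)) (hconj (HF k (n - 1))) =
      ![kFib k (2 * n - 1) - kFib k (2 * n + 1) - kFib k (2 * n + 3) - kFib k (2 * n + 5),
        0, 0, 0] := by
  obtain ⟨m, rfl⟩ : ∃ m, n = m + 1 := ⟨n - 1, by omega⟩
  have h1 := kFib_sq k m
  have h2 := kFib_sq k (m+1)
  have h3 := kFib_sq k (m+2)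
  have h4 := kFib_sq k (m+3)
  funext i
  fin_cases i <;>
    simp [hmul, hconj, HF, show m + 1 - 1 = m from rfl,
      show 2*(m+1)-1 = 2*m+1 by omega]
  · ring_nf at h1 h2 h3 h4 ⊢
    linarith
  · ring
  · ring
  · ring
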